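/- There exist absolute constants C, c > 0 with the following property. Let E be a real topological vector space, γ a Borel probability measure on E, and H ⊆ E a symmetric set (h ∈ H implies −h ∈ H) such that the Gaussian isoperimetric inequality holds for (γ, H): for every Borel set A ⊆ E, every c' ∈ ℝ and every t ≥ 0, γ(A) ≥ Φ(c') implies γ*(A + tH) ≥ Φ(c' + t). Let F : E → ℝ be Borel measurable, let M ∈ ℝ be a median of F under γ (i.e. γ({F ≤ M}) ≥ 1/2 and γ({F ≥ M}) ≥ 1/2), and suppose ε > 0, η > 0 and a Borel set 𝓔 ⊆ E with γ(𝓔) ≤ 1/4 are such that F(x + u) ≥ F(x) − ε for every x ∈ E \ 𝓔 and every u ∈ η·H. Then γ({x ∈ E : |F(x) − M| > ε}) ≤ C·e^{−c η²} + γ(𝓔). -/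

import Mathlib

open MeasureTheory Set

noncomputable def stdGaussianCDF (s : ℝ) : ℝ :=
  ∫ x in Set.Iic s, Real.exp (-x ^ 2 / 2) / Real.sqrt (2 * Real.pi)

noncomputable def gaussDen (x : ℝ) : ℝ := Real.exp (-x ^ 2 / 2) / Real.sqrt (2 * Real.pi)

lemma gaussDen_eq : gaussDen = fun x => Real.exp (-(1/2) * x ^ 2) * (Real.sqrt (2 * Real.pi))⁻¹ := by
  funext x; rw [gaussDen, div_eq_mul_inv]; ring_nf

lemma gaussDen_nonneg (x : ℝ) : 0 ≤ gaussDen x := by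
  unfold gaussDen; positivity

lemma integrable_gaussDen : Integrable gaussDen := by
  rw [gaussDen_eq]
  exact (integrable_exp_neg_mul_sq (by norm_num)).mul_const _

lemma integral_gaussDen : ∫ x, gaussDen x = 1 := by
  rw [gaussDen_eq]
  rw [integral_mul_const, integral_gaussian]
  rw [show Real.pi / (1/2) = 2 * Real.pi by ring]
  field_simp

lemma stdGaussianCDF_eq (s : ℝ) : stdGaussianCDF s = ∫ x in Iic s, gaussDen x := rfl

lemma stdGaussianCDF_add_tail (s : ℝ) :
    stdGaussianCDF s + ∫ x in Ioi s, gaussDen x = 1 := by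
  rw [stdGaussianCDF_eq, intervalIntegral.integral_Iic_add_Ioi integrable_gaussDen.integrableOn
    integrable_gaussDen.integrableOn, integral_gaussDen]

lemma tail_nonneg (s : ℝ) : 0 ≤ ∫ x in Ioi s, gaussDen x :=
  setIntegral_nonneg measurableSet_Ioi fun x _ => gaussDen_nonneg x

lemma stdGaussianCDF_nonneg (s : ℝ) : 0 ≤ stdGaussianCDF s :=
  setIntegral_nonneg measurableSet_Iic fun x _ => gaussDen_nonneg x

lemma stdGaussianCDF_le_one (s : ℝ) : stdGaussianCDF s ≤ 1 := by
  have := stdGaussianCDF_add_tail s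
  have := tail_nonneg s
  linarith

lemma gaussDen_neg (x : ℝ) : gaussDen (-x) = gaussDen x := by
  unfold gaussDen; rw [neg_pow]; norm_num

lemma stdGaussianCDF_neg (s : ℝ) : stdGaussianCDF (-s) = ∫ x in Ioi s, gaussDen x := by
  rw [stdGaussianCDF_eq, ← integral_comp_neg_Ioi]
  simp_rw [gaussDen_neg]

lemma stdGaussianCDF_zero : stdGaussianCDF 0 = 1 / 2 := by
  have h1 := stdGaussianCDF_add_tail 0
  have h2 := stdGaussianCDF_neg 0
  rw [neg_zero] at h2
  linarith

lemma integral_x_exp (s : ℝ) :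
    ∫ x in Ioi s, x * Real.exp (-x ^ 2 / 2) = Real.exp (-s ^ 2 / 2) := by
  have hd : ∀ x ∈ Ici s, HasDerivAt (fun y : ℝ => -Real.exp (-y ^ 2 / 2))
      (x * Real.exp (-x ^ 2 / 2)) x := by
    intro x _
    have h1 : HasDerivAt (fun y : ℝ => -y ^ 2 / 2) (-x) x := by
      have := ((hasDerivAt_pow 2 x).neg).div_const 2
      exact this.congr_deriv (by push_cast; ring)
    have := (h1.exp).neg
    exact this.congr_deriv (by ring)
  have hint : IntegrableOn (fun x : ℝ => x * Real.exp (-x ^ 2 / 2)) (Ioi s) := by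
    have : Integrable (fun x : ℝ => x * Real.exp (-(1/2) * x ^ 2)) :=
      integrable_mul_exp_neg_mul_sq (by norm_num)
    have h2 : (fun x : ℝ => x * Real.exp (-x ^ 2 / 2)) =
        fun x : ℝ => x * Real.exp (-(1/2) * x ^ 2) := by
      funext x; ring_nf
    rw [h2]; exact this.integrableOn
  have htend : Filter.Tendsto (fun y : ℝ => -Real.exp (-y ^ 2 / 2)) Filter.atTop (nhds 0) := by
    rw [show (0:ℝ) = -0 by ring]
    apply Filter.Tendsto.neg
    apply Real.tendsto_exp_atBot.comp
    have h1 : Filter.Tendsto (fun y : ℝ => y ^ 2 / 2) Filter.atTop Filter.atTop :=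
      (Filter.tendsto_pow_atTop two_ne_zero).atTop_div_const (by norm_num)
    have := Filter.tendsto_neg_atTop_atBot.comp h1
    convert this using 2 with y; simp [Function.comp]; ring
  have := integral_Ioi_of_hasDerivAt_of_tendsto' hd hint htend
  rw [this]; ring

lemma sqrt_two_pi_ge_one : (1:ℝ) ≤ Real.sqrt (2 * Real.pi) := by
  rw [show (1:ℝ) = Real.sqrt 1 by simp]
  apply Real.sqrt_le_sqrt
  nlinarith [Real.pi_gt_three]

lemma tail_le (s : ℝ) (hs : 1 ≤ s) :
    1 - stdGaussianCDF s ≤ Real.exp (-s ^ 2 / 2) := by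
  have h1 : 1 - stdGaussianCDF s = ∫ x in Ioi s, gaussDen x := by
    have := stdGaussianCDF_add_tail s; linarith
  rw [h1, ← integral_x_exp s]
  apply setIntegral_mono_on integrable_gaussDen.integrableOn _ measurableSet_Ioi
  · intro x hx
    have hx1 : 1 ≤ x := le_trans hs (le_of_lt hx)
    unfold gaussDen
    have h2 : Real.exp (-x ^ 2 / 2) / Real.sqrt (2 * Real.pi) ≤ Real.exp (-x ^ 2 / 2) := by
      apply div_le_self (Real.exp_nonneg _) sqrt_two_pi_ge_one
    nlinarith [Real.exp_nonneg (-x ^ 2 / 2)]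
  · have : Integrable (fun x : ℝ => x * Real.exp (-(1/2) * x ^ 2)) :=
      integrable_mul_exp_neg_mul_sq (by norm_num)
    have h2 : (fun x : ℝ => x * Real.exp (-x ^ 2 / 2)) =
        fun x : ℝ => x * Real.exp (-(1/2) * x ^ 2) := by
      funext x; ring_nf
    rw [h2]; exact this.integrableOn

lemma stdGaussianCDF_neg_two : stdGaussianCDF (-2) ≤ 1 / 4 := by
  have h1 := stdGaussianCDF_neg 2
  have h2 := tail_le 2 (by norm_num)
  have h3 : 1 - stdGaussianCDF 2 = ∫ x in Ioi (2:ℝ), gaussDen x := by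
    have := stdGaussianCDF_add_tail 2; linarith
  have h4 : Real.exp (-(2:ℝ) ^ 2 / 2) ≤ 1 / 4 := by
    rw [show (-(2:ℝ) ^ 2 / 2) = -2 by norm_num]
    rw [Real.exp_neg]
    rw [inv_le_comm₀ (Real.exp_pos 2) (by norm_num)]
    rw [show (2:ℝ) = 1 + 1 by norm_num, Real.exp_add]
    nlinarith [Real.exp_one_gt_d9]
  linarith


lemma key_ineq (η : ℝ) (hη : 0 < η) :
    (1 - stdGaussianCDF η) + (1 - stdGaussianCDF (η - 2)) ≤
      2 * Real.exp 2 * Real.exp (-(1/8) * η ^ 2) := by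
  rcases le_or_gt η 4 with h4 | h4
  · have e1 : (1:ℝ) ≤ Real.exp (2 + -(1/8) * η ^ 2) := by
      apply Real.one_le_exp; nlinarith
    have := stdGaussianCDF_nonneg η
    have := stdGaussianCDF_nonneg (η - 2)
    rw [mul_assoc, ← Real.exp_add]
    nlinarith [stdGaussianCDF_le_one η, stdGaussianCDF_le_one (η - 2)]
  · have t1 : 1 - stdGaussianCDF η ≤ Real.exp (-η ^ 2 / 2) := tail_le η (by linarith)
    have t2 : 1 - stdGaussianCDF (η - 2) ≤ Real.exp (-(η - 2) ^ 2 / 2) :=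
      tail_le _ (by linarith)
    have e1 : Real.exp (-η ^ 2 / 2) ≤ Real.exp (-(1/8) * η ^ 2) := by
      apply Real.exp_le_exp.mpr; nlinarith
    have e2 : Real.exp (-(η - 2) ^ 2 / 2) ≤ Real.exp (-(1/8) * η ^ 2) := by
      apply Real.exp_le_exp.mpr; nlinarith
    have e3 : (1:ℝ) ≤ Real.exp 2 := Real.one_le_exp (by norm_num)
    nlinarith [Real.exp_pos (-(1/8) * η ^ 2)]

open scoped ENNReal Pointwise

theorem stmt5 :
    ∃ C > (0 : ℝ), ∃ c > (0 : ℝ),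
      ∀ (E : Type) [AddCommGroup E] [Module ℝ E] [TopologicalSpace E]
        [IsTopologicalAddGroup E] [ContinuousSMul ℝ E] [MeasurableSpace E] [BorelSpace E]
        (γ : Measure E) [IsProbabilityMeasure γ] (H : Set E),
        (∀ h ∈ H, -h ∈ H) →
        (∀ A : Set E, MeasurableSet A → ∀ c' t : ℝ, 0 ≤ t →
          ENNReal.ofReal (stdGaussianCDF c') ≤ γ A →
          ENNReal.ofReal (stdGaussianCDF (c' + t)) ≤ γ (A + t • H)) →
        ∀ F : E → ℝ, Measurable F →
        ∀ M : ℝ, (1 / 2 : ℝ≥0∞) ≤ γ {x | F x ≤ M} → (1 / 2 : ℝ≥0∞) ≤ γ {x | M ≤ F x} →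
        ∀ ε η : ℝ, 0 < ε → 0 < η →
        ∀ 𝓔 : Set E, MeasurableSet 𝓔 → γ 𝓔 ≤ 1 / 4 →
        (∀ x ∉ 𝓔, ∀ u ∈ η • H, F x - ε ≤ F (x + u)) →
        γ {x | ε < |F x - M|} ≤ ENNReal.ofReal (C * Real.exp (-c * η ^ 2)) + γ 𝓔 := by
  refine ⟨2 * Real.exp 2, by positivity, 1/8, by norm_num, ?_⟩
  intro E _ _ _ _ _ _ _ γ _ H hsym hiso F hF M hM1 hM2 ε η hε hη 𝓔 h𝓔 h𝓔le hLip
  set A : Set E := {x | F x ≤ M} with hAdef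
  set B : Set E := {x | M ≤ F x} \ 𝓔 with hBdef
  have hA : MeasurableSet A := measurableSet_le hF measurable_const
  have hB : MeasurableSet B := (measurableSet_le measurable_const hF).diff h𝓔
  -- γ A ≥ Φ(0)
  have hγA : ENNReal.ofReal (stdGaussianCDF 0) ≤ γ A := by
    rw [stdGaussianCDF_zero]
    refine le_trans (le_of_eq ?_) hM1
    rw [ENNReal.ofReal_div_of_pos (by norm_num), ENNReal.ofReal_one, ENNReal.ofReal_ofNat]
  -- γ B ≥ Φ(-2)
  have hγB : ENNReal.ofReal (stdGaussianCDF (-2)) ≤ γ B := by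
    have hsub : {x | M ≤ F x} ⊆ B ∪ 𝓔 := fun x hx => by
      by_cases h : x ∈ 𝓔
      · exact Or.inr h
      · exact Or.inl ⟨hx, h⟩
    have h1 : (1/2 : ℝ≥0∞) ≤ γ B + 1/4 :=
      le_trans hM2 (le_trans (measure_mono hsub)
        (le_trans (measure_union_le _ _) (add_le_add_right h𝓔le _)))
    have e4 : (1/4 : ℝ≥0∞) = ENNReal.ofReal (1/4) := by
      rw [ENNReal.ofReal_div_of_pos (by norm_num), ENNReal.ofReal_one, ENNReal.ofReal_ofNat]
    have e2 : (1/2 : ℝ≥0∞) = ENNReal.ofReal (1/2) := by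
      rw [ENNReal.ofReal_div_of_pos (by norm_num), ENNReal.ofReal_one, ENNReal.ofReal_ofNat]
    have h2 : (1/4 : ℝ≥0∞) ≤ γ B := by
      rw [show (1/2 : ℝ≥0∞) = 1/4 + 1/4 by
        rw [e2, e4, ← ENNReal.ofReal_add (by norm_num) (by norm_num)]; norm_num] at h1
      exact (ENNReal.add_le_add_iff_right (by norm_num)).mp h1
    refine le_trans ?_ h2
    rw [e4]
    exact ENNReal.ofReal_le_ofReal stdGaussianCDF_neg_two
  -- isoperimetry
  have hIA := hiso A hA 0 η hη.le hγA
  have hIB := hiso B hB (-2) η hη.le hγB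
  rw [zero_add] at hIA
  -- inclusion 1
  have hinc1 : A + η • H ⊆ ({x | M + ε < F x} \ 𝓔)ᶜ := by
    rintro x ⟨a, ha, u, hu, rfl⟩ ⟨hgt, hnE⟩
    obtain ⟨h0, hh0, rfl⟩ := hu
    have hmem : -(η • h0) ∈ η • H := by
      rw [← smul_neg]
      exact smul_mem_smul_set (hsym h0 hh0)
    have := hLip (a + η • h0) hnE (-(η • h0)) hmem
    rw [add_neg_cancel_right] at this
    have haM : F a ≤ M := ha
    simp only [mem_setOf_eq] at hgt
    linarith
  -- inclusion 2
  have hinc2 : B + η • H ⊆ {x | M - ε ≤ F x} := by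
    rintro x ⟨b, ⟨hbM, hbE⟩, u, hu, rfl⟩
    have := hLip b hbE u hu
    have hbM' : M ≤ F b := hbM
    simp only [mem_setOf_eq]
    linarith
  -- bound on upper deviation
  have hW : MeasurableSet ({x | M + ε < F x} \ 𝓔) :=
    (measurableSet_lt measurable_const hF).diff h𝓔
  have hup : γ ({x | M + ε < F x} \ 𝓔) ≤ 1 - ENNReal.ofReal (stdGaussianCDF η) := by
    have h1 : ENNReal.ofReal (stdGaussianCDF η) ≤ γ (({x | M + ε < F x} \ 𝓔)ᶜ) :=
      le_trans hIA (measure_mono hinc1)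
    rw [prob_compl_eq_one_sub hW] at h1
    calc γ ({x | M + ε < F x} \ 𝓔)
        = 1 - (1 - γ ({x | M + ε < F x} \ 𝓔)) := by
          rw [ENNReal.sub_sub_cancel ENNReal.one_ne_top prob_le_one]
      _ ≤ 1 - ENNReal.ofReal (stdGaussianCDF η) := tsub_le_tsub_left h1 1
  -- bound on lower deviation
  have hlowset : MeasurableSet {x | M - ε ≤ F x} := measurableSet_le measurable_const hF
  have hlow : γ {x | F x < M - ε} ≤ 1 - ENNReal.ofReal (stdGaussianCDF (-2 + η)) := by
    have h1 : ENNReal.ofReal (stdGaussianCDF (-2 + η)) ≤ γ {x | M - ε ≤ F x} :=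
      le_trans hIB (measure_mono hinc2)
    have h2 : {x | F x < M - ε} = {x | M - ε ≤ F x}ᶜ := by
      ext x; simp only [mem_compl_iff, mem_setOf_eq, not_le]
    rw [h2, prob_compl_eq_one_sub hlowset]
    exact tsub_le_tsub_left h1 1
  -- combine
  have hsplit : {x | ε < |F x - M|} ⊆
      (({x | M + ε < F x} \ 𝓔) ∪ 𝓔) ∪ {x | F x < M - ε} := by
    intro x hx
    simp only [mem_setOf_eq] at hx
    rcases lt_abs.mp hx with h | h
    · by_cases hE : x ∈ 𝓔
      · exact Or.inl (Or.inr hE)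
      · exact Or.inl (Or.inl ⟨by simp only [mem_setOf_eq]; linarith, hE⟩)
    · exact Or.inr (by simp only [mem_setOf_eq]; linarith)
  have hone : ∀ s : ℝ, (1:ℝ≥0∞) - ENNReal.ofReal (stdGaussianCDF s) =
      ENNReal.ofReal (1 - stdGaussianCDF s) := by
    intro s
    rw [ENNReal.ofReal_sub _ (stdGaussianCDF_nonneg s), ENNReal.ofReal_one]
  calc γ {x | ε < |F x - M|}
      ≤ γ ((({x | M + ε < F x} \ 𝓔) ∪ 𝓔) ∪ {x | F x < M - ε}) := measure_mono hsplit
    _ ≤ γ (({x | M + ε < F x} \ 𝓔) ∪ 𝓔) + γ {x | F x < M - ε} := measure_union_le _ _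
    _ ≤ (γ ({x | M + ε < F x} \ 𝓔) + γ 𝓔) + γ {x | F x < M - ε} :=
        add_le_add_left (measure_union_le _ _) _
    _ ≤ ((1 - ENNReal.ofReal (stdGaussianCDF η)) + γ 𝓔) +
          (1 - ENNReal.ofReal (stdGaussianCDF (-2 + η))) :=
        add_le_add (add_le_add_left hup _) hlow
    _ = ((1 - ENNReal.ofReal (stdGaussianCDF η)) +
          (1 - ENNReal.ofReal (stdGaussianCDF (-2 + η)))) + γ 𝓔 := by ring
    _ ≤ ENNReal.ofReal (2 * Real.exp 2 * Real.exp (-(1/8) * η ^ 2)) + γ 𝓔 := by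
        apply add_le_add_left
        rw [hone, hone, ← ENNReal.ofReal_add (by linarith [stdGaussianCDF_le_one η])
          (by linarith [stdGaussianCDF_le_one (-2 + η)])]
        apply ENNReal.ofReal_le_ofReal
        have := key_ineq η hη
        rw [show (-2 + η : ℝ) = η - 2 by ring]
        linarith
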